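/- Let P_B be the Borel probability measure on ℝ whose cumulative distribution function G satisfies G(x) = 0 for x < 0, G(x) = x/(3−3x) for 0 ≤ x ≤ 1/2, G(x) = (4x−1)/3 for 1/2 < x ≤ 2/3, G(x) = (x+1)/3 for 2/3 < x ≤ 2, and G(x) = 1 for x > 2. For every instance I = (F_S, F_B) of bilateral trade in which F_S and F_B have finite first moments, letting μ = E_{B ~ F_B}[B], the mechanism M_B that draws x ~ P_B and posts the price x·μ satisfies ∫ W(I, x·μ) dP_B(x) ≥ (2/3)·OPT(I). -/

import Mathlib

set_option maxHeartbeats 2000000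

open MeasureTheory Set ENNReal Filter Topology


/-- The cdf of the price-sampling distribution. -/
noncomputable def Fcdf : ℝ → ℝ := fun x =>
  if x ≤ 1/2 then max x 0 / (3 - 3 * min x (1/2))
  else if x ≤ 2/3 then (4*x - 1)/3
  else if x ≤ 2 then (x+1)/3
  else 1

noncomputable def betaF : ℝ → ℝ := fun s => if s ≤ 1/2 then 1/3 - Fcdf s else 0

lemma Fcdf_eq1 {x : ℝ} (h0 : 0 ≤ x) (h : x ≤ 1/2) : Fcdf x = x / (3 - 3*x) := by
  unfold Fcdf; rw [if_pos h, max_eq_left h0, min_eq_left h]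

lemma Fcdf_eq0 {x : ℝ} (h : x < 0) : Fcdf x = 0 := by
  have h2 : x ≤ 1/2 := by linarith
  unfold Fcdf; rw [if_pos h2, max_eq_right h.le]; simp

lemma Fcdf_eq2 {x : ℝ} (h1 : 1/2 < x) (h2 : x ≤ 2/3) : Fcdf x = (4*x-1)/3 := by
  unfold Fcdf; rw [if_neg (not_le.mpr h1), if_pos h2]

lemma Fcdf_eq3 {x : ℝ} (h1 : 2/3 < x) (h2 : x ≤ 2) : Fcdf x = (x+1)/3 := by
  have h0 : ¬ x ≤ 1/2 := by push_neg; linarith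
  unfold Fcdf; rw [if_neg h0, if_neg (not_le.mpr h1), if_pos h2]

lemma Fcdf_eq4 {x : ℝ} (h : 2 < x) : Fcdf x = 1 := by
  have h1 : ¬ x ≤ 1/2 := by push_neg; linarith
  have h2 : ¬ x ≤ 2/3 := by push_neg; linarith
  unfold Fcdf; rw [if_neg h1, if_neg h2, if_neg (not_le.mpr h)]

lemma betaF_eq1 {x : ℝ} (h : x ≤ 1/2) : betaF x = 1/3 - Fcdf x := by
  unfold betaF; rw [if_pos h]

lemma betaF_eq2 {x : ℝ} (h : ¬ x ≤ 1/2) : betaF x = 0 := by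
  unfold betaF; rw [if_neg h]

lemma Fcdf_cont : Continuous Fcdf := by
  have hden : ∀ x : ℝ, 3 - 3 * min x (1/2) ≠ 0 := by
    intro x; have := min_le_right x (1/2 : ℝ); nlinarith
  have h1 : Continuous (fun x : ℝ => max x 0 / (3 - 3 * min x (1/2))) := by
    exact (continuous_id.max continuous_const).div
      (continuous_const.sub (continuous_const.mul (continuous_id.min continuous_const))) hden
  unfold Fcdf
  refine Continuous.if_le h1 ?_ continuous_id continuous_const ?_
  · refine Continuous.if_le (by fun_prop) ?_ continuous_id continuous_const ?_
    · refine Continuous.if_le (by fun_prop) continuous_const continuous_id continuous_const ?_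
      intro x hx; norm_num [hx]
    · intro x hx; norm_num [hx]
  · intro x hx; rw [hx]; norm_num

lemma betaF_nonneg (x : ℝ) : 0 ≤ betaF x := by
  by_cases h : x ≤ 1/2
  · rw [betaF_eq1 h]
    rcases lt_or_ge x 0 with h0 | h0
    · rw [Fcdf_eq0 h0]; norm_num
    · rw [Fcdf_eq1 h0 h]
      have hd : (0:ℝ) < 3 - 3*x := by linarith
      have : x / (3-3*x) ≤ 1/3 := by rw [div_le_iff₀ hd]; nlinarith
      linarith
  · rw [betaF_eq2 h]

/-- Normalized core inequality. -/
lemma coreN (σ α p : ℝ) (hσ : 0 ≤ σ) (hα : 0 ≤ α) (hp : 0 ≤ p)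
    (hpF : σ ≤ α → Fcdf α - Fcdf σ ≤ p) :
    2 * max (α - σ) 0 + 3 * betaF σ * α ≤ σ * α + 3 * (max (α - σ) 0) * p + 3 * betaF σ := by
  rcases le_total α σ with hle | hle
  · rw [max_eq_right (by linarith)]
    by_cases hσ2 : σ ≤ 1/2
    · have hα1 : α ≤ 1 := by linarith
      nlinarith [mul_nonneg hσ hα, mul_nonneg (betaF_nonneg σ) (by linarith : 0 ≤ 1 - α)]
    · rw [betaF_eq2 hσ2]; nlinarith [mul_nonneg hσ hα]
  · have hmax : max (α - σ) 0 = α - σ := max_eq_left (by linarith)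
    have hF := hpF hle
    have hmono : (α - σ) * (Fcdf α - Fcdf σ) ≤ (α - σ) * p :=
      mul_le_mul_of_nonneg_left hF (by linarith)
    rw [hmax]
    have key : 2 * (α - σ) + 3 * betaF σ * α ≤ σ * α + 3 * ((α - σ) * (Fcdf α - Fcdf σ)) + 3 * betaF σ := by
      by_cases hσ2 : σ ≤ 1/2
      · have hFσ : Fcdf σ = σ / (3 - 3*σ) := Fcdf_eq1 hσ hσ2
        have hβ : betaF σ = 1/3 - σ/(3-3*σ) := by rw [betaF_eq1 hσ2, hFσ]
        have hdσ : (0:ℝ) < 3 - 3*σ := by linarith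
        rw [hβ, hFσ, ← sub_nonneg]
        by_cases hα2 : α ≤ 1/2
        · have hdα : (0:ℝ) < 3 - 3*α := by linarith
          rw [Fcdf_eq1 hα hα2]
          have h : σ * α + 3 * ((α - σ) * (α/(3-3*α) - σ/(3-3*σ))) + 3 * (1/3 - σ/(3-3*σ))
              - (2 * (α - σ) + 3 * (1/3 - σ/(3-3*σ)) * α)
              = (3*(3-12*α+12*α^2+9*σ*α-15*σ*α^2-3*σ^2+3*σ^2*α+3*σ^2*α^2)) / ((3-3*σ)*(3-3*α)) := by
            have h1σ : (1:ℝ) - σ ≠ 0 := (by linarith : (0:ℝ) < 1 - σ).ne'; have h1α : (1:ℝ) - α ≠ 0 := (by linarith : (0:ℝ) < 1 - α).ne'; field_simp; ring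
          rw [h]
          apply div_nonneg ?_ (mul_pos hdσ hdα).le
          nlinarith [sq_nonneg (2*α-1), mul_nonneg (mul_nonneg hσ hα) (by nlinarith : (0:ℝ) ≤ 2-4*α+α^2),
            mul_nonneg (mul_nonneg hσ (by linarith : (0:ℝ) ≤ α-σ)) (by nlinarith : (0:ℝ) ≤ 1-α-α^2)]
        · push_neg at hα2
          by_cases hα3 : α ≤ 2/3
          · rw [Fcdf_eq2 hα2 hα3]
            have h : σ * α + 3 * ((α - σ) * ((4*α-1)/3 - σ/(3-3*σ))) + 3 * (1/3 - σ/(3-3*σ))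
                - (2 * (α - σ) + 3 * (1/3 - σ/(3-3*σ)) * α)
                = (3*(1-4*α+4*α^2+σ+σ*α-4*σ*α^2-2*σ^2+3*σ^2*α)) / (3-3*σ) := by
              have h1σ : (1:ℝ) - σ ≠ 0 := (by linarith : (0:ℝ) < 1 - σ).ne'; field_simp; ring
            rw [h]
            apply div_nonneg ?_ hdσ.le
            nlinarith [sq_nonneg (2*α-1), sq_nonneg (α-11/16),
              mul_nonneg (mul_nonneg hσ (by linarith : (0:ℝ) ≤ 1/2-σ)) (by linarith : (0:ℝ) ≤ 2-3*α),
              mul_nonneg (mul_nonneg (by linarith : (0:ℝ) ≤ 1/2-σ) (by linarith : (0:ℝ) ≤ α)) (by linarith : (0:ℝ) ≤ α - 1/2),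
              mul_nonneg hσ (by linarith : (0:ℝ) ≤ α - 1/2)]
          · push_neg at hα3
            by_cases hα4 : α ≤ 2
            · rw [Fcdf_eq3 hα3 hα4]
              have h : σ * α + 3 * ((α - σ) * ((α+1)/3 - σ/(3-3*σ))) + 3 * (1/3 - σ/(3-3*σ))
                  - (2 * (α - σ) + 3 * (1/3 - σ/(3-3*σ)) * α)
                  = (3*(1-2*α+α^2-σ+2*σ*α-σ*α^2)) / (3-3*σ) := by
                have h1σ : (1:ℝ) - σ ≠ 0 := (by linarith : (0:ℝ) < 1 - σ).ne'; field_simp; ring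
              rw [h]
              apply div_nonneg ?_ hdσ.le
              nlinarith [mul_nonneg (sq_nonneg (1-α)) (by linarith : (0:ℝ) ≤ 1-σ)]
            · push_neg at hα4
              rw [Fcdf_eq4 hα4]
              have h : σ * α + 3 * ((α - σ) * (1 - σ/(3-3*σ))) + 3 * (1/3 - σ/(3-3*σ))
                  - (2 * (α - σ) + 3 * (1/3 - σ/(3-3*σ)) * α)
                  = (3*(1-3*σ+σ*α+2*σ^2-σ^2*α)) / (3-3*σ) := by
                have h1σ : (1:ℝ) - σ ≠ 0 := (by linarith : (0:ℝ) < 1 - σ).ne'; field_simp; ring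
              rw [h]
              apply div_nonneg ?_ hdσ.le
              nlinarith [mul_nonneg (mul_nonneg hσ (by linarith : (0:ℝ) ≤ 1-σ)) (by linarith : (0:ℝ) ≤ α),
                mul_nonneg (by linarith : (0:ℝ) ≤ 1-σ) (by linarith : (0:ℝ) ≤ 1-2*σ)]
      · push_neg at hσ2
        rw [betaF_eq2 (not_le.mpr hσ2)]
        by_cases hσ3 : σ ≤ 2/3
        · rw [Fcdf_eq2 hσ2 hσ3]
          by_cases hα3 : α ≤ 2/3
          · rw [Fcdf_eq2 (lt_of_lt_of_le hσ2 hle) hα3]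
            nlinarith [sq_nonneg (4*(α-σ)-3/4), mul_nonneg (by linarith : (0:ℝ) ≤ σ-1/2) (by linarith : (0:ℝ) ≤ α-σ),
              sq_nonneg (σ-1/2), sq_nonneg (α-σ)]
          · push_neg at hα3
            by_cases hα4 : α ≤ 2
            · rw [Fcdf_eq3 hα3 hα4]; nlinarith [sq_nonneg (α-2*σ)]
            · push_neg at hα4
              rw [Fcdf_eq4 hα4]
              nlinarith [mul_nonneg (by linarith : (0:ℝ) ≤ α-2) (by linarith : (0:ℝ) ≤ 6-9*σ), sq_nonneg (1-σ)]
        · push_neg at hσ3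
          by_cases hσ4 : σ ≤ 2
          · rw [Fcdf_eq3 hσ3 hσ4]
            by_cases hα4 : α ≤ 2
            · rw [Fcdf_eq3 (lt_of_lt_of_le hσ3 hle) hα4]
              nlinarith [sq_nonneg (2*α-2-σ), mul_nonneg (by linarith : (0:ℝ) ≤ 3*σ-2) (by linarith : (0:ℝ) ≤ σ+2)]
            · push_neg at hα4
              rw [Fcdf_eq4 hα4]; nlinarith [sq_nonneg σ]
          · push_neg at hσ4
            rw [Fcdf_eq4 hσ4, Fcdf_eq4 (lt_of_lt_of_le hσ4 hle)]
            nlinarith [mul_nonneg (by linarith : (0:ℝ) ≤ σ-2) (by linarith : (0:ℝ) ≤ α)]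
    nlinarith [key, hmono]

/-- Unnormalized core inequality (scaled by `m²`). -/
lemma core (m s a p : ℝ) (hm : 0 < m) (hs : 0 ≤ s) (ha : 0 ≤ a) (hp : 0 ≤ p)
    (hpF : s ≤ a → Fcdf (a/m) - Fcdf (s/m) ≤ p) :
    2 * m * max (a - s) 0 + 3 * betaF (s/m) * m * a
      ≤ s * a + 3 * m * (max (a - s) 0) * p + 3 * betaF (s/m) * m * m := by
  have hσ : 0 ≤ s/m := div_nonneg hs hm.le
  have hα : 0 ≤ a/m := div_nonneg ha hm.le
  have h := coreN (s/m) (a/m) p hσ hα hp (fun h' => hpF (by have h2 := mul_le_mul_of_nonneg_right h' hm.le; rwa [div_mul_cancel₀ _ (ne_of_gt hm), div_mul_cancel₀ _ (ne_of_gt hm)] at h2))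
  have hmax : max (a/m - s/m) 0 = (max (a - s) 0) / m := by
    rw [div_sub_div_same, ← max_div_div_right hm.le]; simp
  rw [hmax] at h
  have h2 := mul_le_mul_of_nonneg_left h (le_of_lt (mul_pos hm hm))
  have hm' : m ≠ 0 := ne_of_gt hm
  calc 2 * m * max (a - s) 0 + 3 * betaF (s/m) * m * a
      = m * m * (2 * ((max (a-s) 0)/m) + 3 * betaF (s/m) * (a/m)) := by field_simp
    _ ≤ m * m * (s/m * (a/m) + 3 * ((max (a-s) 0)/m) * p + 3 * betaF (s/m)) := h2
    _ = s * a + 3 * m * (max (a - s) 0) * p + 3 * betaF (s/m) * m * m := by field_simp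

lemma Fcdf_nonneg (x : ℝ) : 0 ≤ Fcdf x := by
  rcases lt_or_ge x 0 with h | h
  · rw [Fcdf_eq0 h]
  · rcases le_or_gt x (1/2) with h2 | h2
    · rw [Fcdf_eq1 h h2]
      have hd : (0:ℝ) < 3 - 3*x := by linarith
      positivity
    · rcases le_or_gt x (2/3) with h3 | h3
      · rw [Fcdf_eq2 h2 h3]; linarith
      · rcases le_or_gt x 2 with h4 | h4
        · rw [Fcdf_eq3 h3 h4]; linarith
        · rw [Fcdf_eq4 h4]; norm_num

/-- representation of numbers in [0,1] as length of sublevel set -/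
lemma unit_rep {r : ℝ≥0∞} (hr : r ≤ 1) :
    ∫⁻ l in Ioo (0:ℝ) 1, (if ENNReal.ofReal l < r then 1 else 0) ∂volume = r := by
  have hS : MeasurableSet {l : ℝ | ENNReal.ofReal l < r} :=
    measurableSet_lt ENNReal.measurable_ofReal measurable_const
  have h1 : (fun l : ℝ => if ENNReal.ofReal l < r then (1:ℝ≥0∞) else 0)
      = Set.indicator {l : ℝ | ENNReal.ofReal l < r} (fun _ => 1) := by
    funext l; simp [Set.indicator_apply, mem_setOf_eq]
  rw [h1, lintegral_indicator hS, Measure.restrict_restrict hS, lintegral_one,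
    Measure.restrict_apply MeasurableSet.univ, univ_inter]
  have hrt : r ≠ ⊤ := ne_top_of_le_ne_top one_ne_top hr
  have h2 : {l : ℝ | ENNReal.ofReal l < r} ∩ Ioo 0 1 = Ioo 0 r.toReal := by
    ext l
    simp only [mem_inter_iff, mem_setOf_eq, mem_Ioo]
    constructor
    · rintro ⟨h3, h4, h5⟩
      exact ⟨h4, (ENNReal.ofReal_lt_iff_lt_toReal h4.le hrt).mp h3⟩
    · rintro ⟨h4, h5⟩
      have h6 : r.toReal ≤ 1 := by
        simpa using ENNReal.toReal_mono one_ne_top hr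
      exact ⟨(ENNReal.ofReal_lt_iff_lt_toReal h4.le hrt).mpr h5, h4, lt_of_lt_of_le h5 h6⟩
  rw [h2, Real.volume_Ioo, sub_zero, ENNReal.ofReal_toReal hrt]

/-- translation identity -/
lemma trans_vol (A : Set ℝ) (c : ℝ) :
    volume ((fun t => c + t) ⁻¹' A ∩ Ioi 0) = volume (A ∩ Ioi c) := by
  have h : (fun t => c + t) ⁻¹' (A ∩ Ioi c) = (fun t => c + t) ⁻¹' A ∩ Ioi 0 := by
    ext t; simp only [preimage_inter, mem_inter_iff, mem_preimage, mem_Ioi]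
    constructor
    · rintro ⟨h1, h2⟩; exact ⟨h1, by linarith⟩
    · rintro ⟨h1, h2⟩; exact ⟨h1, by linarith⟩
  rw [← h, measure_preimage_add]

lemma perS (PB ν : Measure ℝ) [IsProbabilityMeasure PB] [IsProbabilityMeasure ν]
    (hPBIoo : ∀ a b : ℝ, a ≤ b → ENNReal.ofReal (Fcdf b - Fcdf a) ≤ PB (Ioo a b))
    (hν : ν (Iio 0) = 0) (hνi : Integrable id ν) {m : ℝ} (hmdef : m = ∫ b, b ∂ν)
    (s : ℝ) (hs : 0 ≤ s) :
    2 * ∫⁻ b, ENNReal.ofReal (max (b - s) 0) ∂ν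
      ≤ ENNReal.ofReal s
        + 3 * ∫⁻ x, (∫⁻ b, ENNReal.ofReal (if s ≤ x * m ∧ x * m ≤ b then b - s else 0) ∂ν) ∂PB := by
  have hνae : ∀ᵐ b ∂ν, 0 ≤ b := by
    rw [ae_iff]
    convert hν using 2
    ext b; simp [not_le]
  have hm0 : 0 ≤ m := hmdef ▸ integral_nonneg_of_ae hνae
  rcases eq_or_lt_of_le hm0 with hm | hm
  · -- m = 0 : the left side vanishes
    have hb0 : ∀ᵐ b ∂ν, b = 0 := by
      have h := (integral_eq_zero_iff_of_nonneg_ae hνae hνi).mp (hmdef ▸ hm.symm)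
      filter_upwards [h] with b hb using hb
    have hJ1 : ∫⁻ b, ENNReal.ofReal (max (b - s) 0) ∂ν = 0 := by
      have h : ∀ᵐ b ∂ν, ENNReal.ofReal (max (b - s) 0) = 0 := by
        filter_upwards [hb0] with b hb
        rw [hb, max_eq_right (by linarith)]; simp
      rw [lintegral_congr_ae h, lintegral_zero]
    rw [hJ1]; simpa using zero_le _
  · -- m > 0
    set g : ℝ → ℝ≥0∞ := fun u => ν (Ioi u) with hgdef
    have hg_anti : Antitone g := fun u v huv => measure_mono (Ioi_subset_Ioi huv)
    have hg_meas : Measurable g := hg_anti.measurable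
    have hg_le1 : ∀ u, g u ≤ 1 := fun u => prob_le_one
    set S : ℝ → Set ℝ := fun l => {u | ENNReal.ofReal l < g u} with hSdef
    have hS_meas : ∀ l, MeasurableSet (S l) := fun l => measurableSet_lt measurable_const hg_meas
    have hS_down : ∀ l (u v : ℝ), u ≤ v → v ∈ S l → u ∈ S l :=
      fun l u v huv hv => lt_of_lt_of_le hv (hg_anti huv)
    set L : ℝ → ℝ≥0∞ := fun l => volume (S l ∩ Ioi 0) with hLdef
    set T : ℝ → ℝ≥0∞ := fun l => volume (S l ∩ Ioi s) with hTdef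
    have hS_mono : ∀ (l l' : ℝ), l ≤ l' → S l' ⊆ S l :=
      fun l l' h u hu => lt_of_le_of_lt (ofReal_le_ofReal h) hu
    have hL_anti : Antitone L := fun l l' h => measure_mono (inter_subset_inter_left _ (hS_mono l l' h))
    have hT_anti : Antitone T := fun l l' h => measure_mono (inter_subset_inter_left _ (hS_mono l l' h))
    have hL_meas : Measurable L := hL_anti.measurable
    have hT_meas : Measurable T := hT_anti.measurable
    set E : ℝ → Set ℝ := fun l => {x | s ≤ x * m ∧ x * m ∈ S l} with hEdef
    have hE_meas : ∀ l, MeasurableSet (E l) := by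
      intro l
      exact (measurableSet_le measurable_const (measurable_id.mul_const m)).inter
        ((measurable_id.mul_const m) (hS_meas l))
    have hPBE_anti : Antitone (fun l => PB (E l)) := by
      intro l l' h
      exact measure_mono (fun x hx => ⟨hx.1, hS_mono l l' h hx.2⟩)
    have hPBE_meas : Measurable (fun l => PB (E l)) := hPBE_anti.measurable
    -- m as an integral of g
    have hmlint : ∫⁻ t in Ioi (0:ℝ), g t ∂volume = ENNReal.ofReal m := by
      have h1 : ∫⁻ b, ENNReal.ofReal (id b) ∂ν = ∫⁻ t in Ioi 0, ν {b : ℝ | t < id b} :=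
        lintegral_eq_lintegral_meas_lt ν hνae aemeasurable_id
      have h2 : ENNReal.ofReal (∫ b, id b ∂ν) = ∫⁻ b, ENNReal.ofReal (id b) ∂ν :=
        ofReal_integral_eq_lintegral_ofReal hνi hνae
      rw [hmdef]
      calc ∫⁻ t in Ioi (0:ℝ), g t ∂volume = ∫⁻ t in Ioi 0, ν {b : ℝ | t < id b} := rfl
        _ = ENNReal.ofReal (∫ b, id b ∂ν) := by rw [← h1, ← h2]
        _ = ENNReal.ofReal (∫ b, b ∂ν) := rfl
    -- pointwise representation of g
    have hgrep : ∀ u, g u = ∫⁻ l in Ioo (0:ℝ) 1, (if ENNReal.ofReal l < g u then 1 else 0) ∂volume :=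
      fun u => (unit_rep (hg_le1 u)).symm
    -- J1 identity
    have hifmeas : Measurable (fun p : ℝ × ℝ => if ENNReal.ofReal p.2 < g (s + p.1) then (1:ℝ≥0∞) else 0) := by
      apply Measurable.ite _ measurable_const measurable_const
      exact measurableSet_lt (ENNReal.measurable_ofReal.comp measurable_snd)
        (hg_meas.comp (measurable_fst.const_add s))
    have hvolT : ∀ l : ℝ, (∫⁻ t in Ioi 0, (if ENNReal.ofReal l < g (s + t) then 1 else 0) ∂volume) = T l := by
      intro l
      have h1 : (fun t : ℝ => if ENNReal.ofReal l < g (s + t) then (1:ℝ≥0∞) else 0)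
          = Set.indicator ((fun t => s + t) ⁻¹' S l) (fun _ => 1) := by
        funext t; simp [Set.indicator_apply, hSdef, mem_preimage, mem_setOf_eq]
      rw [h1, lintegral_indicator (measurable_const_add s (hS_meas l)), setLIntegral_one,
        Measure.restrict_apply (measurable_const_add s (hS_meas l)), trans_vol]
    have hJ1 : ∫⁻ b, ENNReal.ofReal (max (b - s) 0) ∂ν = ∫⁻ l in Ioo (0:ℝ) 1, T l ∂volume := by
      have hnn : 0 ≤ᵐ[ν] fun b => max (b - s) 0 := ae_of_all _ fun b => le_max_right _ _
      have hmeas : AEMeasurable (fun b => max (b - s) 0) ν :=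
        ((measurable_id.sub_const s).max measurable_const).aemeasurable
      rw [lintegral_eq_lintegral_meas_lt ν hnn hmeas]
      have hsets : ∀ t : ℝ, t ∈ Ioi (0:ℝ) → ν {b : ℝ | t < max (b - s) 0} = g (s + t) := by
        intro t ht
        have : {b : ℝ | t < max (b - s) 0} = Ioi (s + t) := by
          ext b
          simp only [mem_setOf_eq, mem_Ioi, lt_max_iff]
          constructor
          · rintro (h | h)
            · linarith
            · exact absurd ht (by simpa using h.le)
          · intro h; left; linarith
        rw [this]
      calc ∫⁻ t in Ioi 0, ν {b : ℝ | t < max (b - s) 0} ∂volume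
          = ∫⁻ t in Ioi 0, g (s + t) ∂volume :=
            setLIntegral_congr_fun measurableSet_Ioi (fun t ht => hsets t ht)
        _ = ∫⁻ t in Ioi 0, ∫⁻ l in Ioo (0:ℝ) 1, (if ENNReal.ofReal l < g (s + t) then 1 else 0) ∂volume ∂volume := by
            apply setLIntegral_congr_fun measurableSet_Ioi (fun t _ => hgrep (s + t))
        _ = ∫⁻ l in Ioo (0:ℝ) 1, ∫⁻ t in Ioi 0, (if ENNReal.ofReal l < g (s + t) then 1 else 0) ∂volume ∂volume :=
            lintegral_lintegral_swap hifmeas.aemeasurable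
        _ = ∫⁻ l in Ioo (0:ℝ) 1, T l ∂volume := by
            apply lintegral_congr fun l => hvolT l
    -- total-mass identity
    have hLrep : ∀ l : ℝ, (∫⁻ t in Ioi 0, (if ENNReal.ofReal l < g t then 1 else 0) ∂volume) = L l := by
      intro l
      have h1 : (fun t : ℝ => if ENNReal.ofReal l < g t then (1:ℝ≥0∞) else 0)
          = Set.indicator (S l) (fun _ => 1) := by
        funext t; simp [Set.indicator_apply, hSdef, mem_setOf_eq]
      rw [h1, lintegral_indicator (hS_meas l), setLIntegral_one,
        Measure.restrict_apply (hS_meas l)]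
    have hifmeas0 : Measurable (fun p : ℝ × ℝ => if ENNReal.ofReal p.2 < g p.1 then (1:ℝ≥0∞) else 0) := by
      apply Measurable.ite _ measurable_const measurable_const
      exact measurableSet_lt (ENNReal.measurable_ofReal.comp measurable_snd) (hg_meas.comp measurable_fst)
    have hLint : ∫⁻ l in Ioo (0:ℝ) 1, L l ∂volume = ENNReal.ofReal m := by
      calc ∫⁻ l in Ioo (0:ℝ) 1, L l ∂volume
          = ∫⁻ l in Ioo (0:ℝ) 1, ∫⁻ t in Ioi 0, (if ENNReal.ofReal l < g t then 1 else 0) ∂volume ∂volume :=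
            (lintegral_congr fun l => (hLrep l).symm)
        _ = ∫⁻ t in Ioi 0, ∫⁻ l in Ioo (0:ℝ) 1, (if ENNReal.ofReal l < g t then 1 else 0) ∂volume ∂volume :=
            (lintegral_lintegral_swap hifmeas0.aemeasurable).symm
        _ = ∫⁻ t in Ioi 0, g t ∂volume := lintegral_congr fun t => unit_rep (hg_le1 t)
        _ = ENNReal.ofReal m := hmlint
    -- J2 lower bound
    set c : ℝ≥0∞ := ENNReal.ofReal (3 * betaF (s/m) * m) with hcdef
    set W : ℝ≥0∞ := ∫⁻ x, (∫⁻ b, ENNReal.ofReal (if s ≤ x * m ∧ x * m ≤ b then b - s else 0) ∂ν) ∂PB with hWdef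
    -- the joint (x,l) kernel
    set phi : ℝ → ℝ → ℝ≥0∞ := fun x l => if s ≤ x * m ∧ x * m ∈ S l then T l else 0 with hphidef
    have hphimeas : Measurable (Function.uncurry phi) := by
      have hset : MeasurableSet {p : ℝ × ℝ | s ≤ p.1 * m ∧ p.1 * m ∈ S p.2} := by
        apply MeasurableSet.inter
        · exact measurableSet_le measurable_const (measurable_fst.mul_const m)
        · exact measurableSet_lt (ENNReal.measurable_ofReal.comp measurable_snd)
            (hg_meas.comp (measurable_fst.mul_const m))
      exact Measurable.ite hset (hT_meas.comp measurable_snd) measurable_const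
    have hphix : ∀ x : ℝ, ∫⁻ l in Ioo (0:ℝ) 1, phi x l ∂volume
        = (if s ≤ x * m then ∫⁻ t in Ioi 0, g (max (s + t) (x * m)) ∂volume else 0) := by
      intro x
      by_cases hsx : s ≤ x * m
      · rw [if_pos hsx]
        have hmaxrep : ∀ t : ℝ, g (max (s + t) (x * m))
            = ∫⁻ l in Ioo (0:ℝ) 1, (if ENNReal.ofReal l < g (max (s + t) (x * m)) then 1 else 0) ∂volume :=
          fun t => hgrep _
        have hswapmeas : Measurable (fun p : ℝ × ℝ =>
            if ENNReal.ofReal p.2 < g (max (s + p.1) (x * m)) then (1:ℝ≥0∞) else 0) := by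
          apply Measurable.ite _ measurable_const measurable_const
          exact measurableSet_lt (ENNReal.measurable_ofReal.comp measurable_snd)
            (hg_meas.comp ((measurable_fst.const_add s).max measurable_const))
        calc ∫⁻ l in Ioo (0:ℝ) 1, phi x l ∂volume
            = ∫⁻ l in Ioo (0:ℝ) 1, volume ({t | max (s + t) (x*m) ∈ S l} ∩ Ioi 0) ∂volume := by
              apply lintegral_congr
              intro l
              by_cases hxl : x * m ∈ S l
              · have hseteq : {t : ℝ | max (s + t) (x*m) ∈ S l} = (fun t => s + t) ⁻¹' S l := by
                  ext t
                  simp only [mem_setOf_eq, mem_preimage]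
                  constructor
                  · intro h; exact hS_down l _ _ (le_max_left _ _) h
                  · intro h
                    rcases max_cases (s + t) (x*m) with ⟨heq, _⟩ | ⟨heq, _⟩ <;> rw [heq]
                    · exact h
                    · exact hxl
                simp only [hphidef, if_pos (And.intro hsx hxl), hseteq]
                rw [trans_vol]
              · have hseteq : {t : ℝ | max (s + t) (x*m) ∈ S l} = ∅ := by
                  ext t
                  simp only [mem_setOf_eq, mem_empty_iff_false, iff_false]
                  intro h
                  exact hxl (hS_down l _ _ (le_max_right _ _) h)
                have hcond : ¬ (s ≤ x*m ∧ x*m ∈ S l) := fun hc => hxl hc.2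
                simp only [hphidef, if_neg hcond, hseteq, empty_inter, measure_empty]
          _ = ∫⁻ l in Ioo (0:ℝ) 1, ∫⁻ t in Ioi 0,
                (if ENNReal.ofReal l < g (max (s + t) (x * m)) then 1 else 0) ∂volume ∂volume := by
              apply lintegral_congr
              intro l
              have h1 : (fun t : ℝ => if ENNReal.ofReal l < g (max (s+t) (x*m)) then (1:ℝ≥0∞) else 0)
                  = Set.indicator {t : ℝ | max (s + t) (x*m) ∈ S l} (fun _ => 1) := by
                funext t; simp [Set.indicator_apply, hSdef, mem_setOf_eq]
              have hmeasset : MeasurableSet {t : ℝ | max (s + t) (x*m) ∈ S l} :=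
                ((measurable_const_add s).max measurable_const) (hS_meas l)
              rw [h1, lintegral_indicator hmeasset, setLIntegral_one, Measure.restrict_apply hmeasset]
          _ = ∫⁻ t in Ioi 0, ∫⁻ l in Ioo (0:ℝ) 1,
                (if ENNReal.ofReal l < g (max (s + t) (x * m)) then 1 else 0) ∂volume ∂volume :=
              (lintegral_lintegral_swap hswapmeas.aemeasurable).symm
          _ = ∫⁻ t in Ioi 0, g (max (s + t) (x * m)) ∂volume :=
              lintegral_congr fun t => (hmaxrep t).symm
      · rw [if_neg hsx]
        have : ∀ l : ℝ, phi x l = 0 := by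
          intro l
          have hcond : ¬ (s ≤ x*m ∧ x*m ∈ S l) := fun hc => hsx hc.1
          simp only [hphidef, if_neg hcond]
        simp only [this, lintegral_zero]
    have hinner : ∀ x : ℝ, (if s ≤ x * m then ∫⁻ t in Ioi 0, g (max (s + t) (x * m)) ∂volume else 0)
        ≤ ∫⁻ b, ENNReal.ofReal (if s ≤ x * m ∧ x * m ≤ b then b - s else 0) ∂ν := by
      intro x
      by_cases hsx : s ≤ x * m
      · rw [if_pos hsx]
        have hnn : 0 ≤ᵐ[ν] fun b : ℝ => if x * m < b then b - s else 0 := by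
          apply ae_of_all
          intro b
          show (0:ℝ) ≤ if x * m < b then b - s else 0
          by_cases hb : x * m < b
          · rw [if_pos hb]; linarith
          · rw [if_neg hb]
        have hmeas2 : AEMeasurable (fun b : ℝ => if x * m < b then b - s else 0) ν := by
          apply Measurable.aemeasurable
          exact Measurable.ite (measurableSet_lt measurable_const measurable_id)
            (measurable_id.sub_const s) measurable_const
        calc ∫⁻ t in Ioi 0, g (max (s + t) (x * m)) ∂volume
            = ∫⁻ t in Ioi 0, ν {b : ℝ | t < (if x * m < b then b - s else 0)} ∂volume := by
              apply setLIntegral_congr_fun measurableSet_Ioi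
              intro t ht
              have hset2 : {b : ℝ | t < (if x * m < b then b - s else 0)} = Ioi (max (s + t) (x*m)) := by
                ext b
                simp only [mem_setOf_eq, mem_Ioi, max_lt_iff]
                constructor
                · intro h
                  by_cases hb : x * m < b
                  · rw [if_pos hb] at h; constructor <;> linarith
                  · rw [if_neg hb] at h; exact absurd ht (by simpa using h.le)
                · rintro ⟨h1, h2⟩
                  rw [if_pos h2]; linarith
              beta_reduce; rw [hset2]
          _ = ∫⁻ b, ENNReal.ofReal (if x * m < b then b - s else 0) ∂ν :=
              (lintegral_eq_lintegral_meas_lt ν hnn hmeas2).symm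
          _ ≤ ∫⁻ b, ENNReal.ofReal (if s ≤ x * m ∧ x * m ≤ b then b - s else 0) ∂ν := by
              apply lintegral_mono
              intro b
              apply ENNReal.ofReal_le_ofReal
              by_cases hb : x * m < b
              · rw [if_pos hb, if_pos (And.intro hsx hb.le)]
              · rw [if_neg hb]
                by_cases hb2 : s ≤ x*m ∧ x*m ≤ b
                · rw [if_pos hb2]; linarith [hb2.1, hb2.2]
                · rw [if_neg hb2]
      · rw [if_neg hsx]; exact zero_le
    have hJ2 : ∫⁻ l in Ioo (0:ℝ) 1, PB (E l) * T l ∂volume ≤ W := by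
      have h1 : ∫⁻ l in Ioo (0:ℝ) 1, PB (E l) * T l ∂volume
          = ∫⁻ l in Ioo (0:ℝ) 1, ∫⁻ x, phi x l ∂PB ∂volume := by
        apply lintegral_congr
        intro l
        have h2 : (fun x => phi x l) = Set.indicator (E l) (fun _ => T l) := by
          funext x
          simp only [hphidef, Set.indicator_apply, hEdef, mem_setOf_eq]
        rw [h2, lintegral_indicator (hE_meas l), setLIntegral_const, mul_comm]
      rw [h1]
      have h3 : ∫⁻ l in Ioo (0:ℝ) 1, ∫⁻ x, phi x l ∂PB ∂volume
          = ∫⁻ x, ∫⁻ l in Ioo (0:ℝ) 1, phi x l ∂volume ∂PB := by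
        apply lintegral_lintegral_swap
        exact (hphimeas.comp measurable_swap).aemeasurable
      rw [h3]
      calc ∫⁻ x, ∫⁻ l in Ioo (0:ℝ) 1, phi x l ∂volume ∂PB
          = ∫⁻ x, (if s ≤ x * m then ∫⁻ t in Ioi 0, g (max (s + t) (x * m)) ∂volume else 0) ∂PB :=
            lintegral_congr hphix
        _ ≤ W := lintegral_mono hinner
    -- per-level inequality
    have hβ0 : 0 ≤ betaF (s/m) := betaF_nonneg _
    set c : ℝ≥0∞ := ENNReal.ofReal (3 * betaF (s/m) * m) with hcdef
    have hperl : ∀ᵐ l ∂(volume.restrict (Ioo (0:ℝ) 1)),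
        ENNReal.ofReal (2*m) * T l + c * L l
          ≤ ENNReal.ofReal s * L l + ENNReal.ofReal (3*m) * (PB (E l) * T l) + c * ENNReal.ofReal m := by
      have hLfin : ∀ᵐ l ∂(volume.restrict (Ioo (0:ℝ) 1)), L l < ⊤ := by
        apply ae_lt_top hL_meas
        rw [hLint]; exact ofReal_ne_top
      filter_upwards [hLfin] with l hfin
      by_cases hsS : s ∈ S l
      · -- s below the quantile
        have hsplit : S l ∩ Ioi 0 = (S l ∩ Ioi s) ∪ Ioc 0 s := by
          ext u
          simp only [mem_inter_iff, mem_union, mem_Ioi, mem_Ioc]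
          constructor
          · rintro ⟨hu1, hu2⟩
            rcases le_or_gt u s with h | h
            · exact Or.inr ⟨hu2, h⟩
            · exact Or.inl ⟨hu1, h⟩
          · rintro (⟨hu1, hu2⟩ | ⟨hu1, hu2⟩)
            · exact ⟨hu1, by linarith⟩
            · exact ⟨hS_down l u s hu2 hsS, hu1⟩
        have hdisj : Disjoint (S l ∩ Ioi s) (Ioc 0 s) := by
          apply Set.disjoint_left.mpr
          rintro u ⟨_, hu2⟩ hu3
          exact absurd hu3.2 (not_le.mpr hu2)
        have hLeq : L l = T l + ENNReal.ofReal s := by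
          rw [hLdef]
          simp only
          rw [hsplit, measure_union hdisj measurableSet_Ioc, Real.volume_Ioc, sub_zero]
        have hTfin : T l ≠ ⊤ := by
          intro hT
          rw [hLeq, hT] at hfin; simp at hfin
        set a : ℝ := s + (T l).toReal with hadef
        have has : s ≤ a := by
          rw [hadef]; nlinarith [ENNReal.toReal_nonneg (a := T l)]
        have ha0 : 0 ≤ a := le_trans hs has
        have hTval : T l = ENNReal.ofReal (a - s) := by
          rw [hadef]; simp only [add_sub_cancel_left]
          exact (ENNReal.ofReal_toReal hTfin).symm
        have hLval : L l = ENNReal.ofReal a := by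
          rw [hLeq, hTval, ← ENNReal.ofReal_add (by linarith) hs]
          congr 1; ring
        -- lower bound for PB (E l)
        have hq : ENNReal.ofReal (Fcdf (a/m) - Fcdf (s/m)) ≤ PB (E l) := by
          refine le_trans (hPBIoo (s/m) (a/m) (by gcongr)) (measure_mono ?_)
          intro x hx
          have hx1 : s/m < x := hx.1
          have hx2 : x < a/m := hx.2
          have hxm1 : s < x * m := by
            have := mul_lt_mul_of_pos_right hx1 hm
            rwa [div_mul_cancel₀ _ (ne_of_gt hm)] at this
          have hxm2 : x * m < a := by
            have := mul_lt_mul_of_pos_right hx2 hm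
            rwa [div_mul_cancel₀ _ (ne_of_gt hm)] at this
          refine ⟨hxm1.le, ?_⟩
          by_contra hnotin
          have hsub : S l ∩ Ioi 0 ⊆ Ioc 0 (x*m) := by
            rintro u ⟨hu1, hu2⟩
            refine ⟨hu2, ?_⟩
            by_contra hgt
            push_neg at hgt
            exact hnotin (hS_down l (x*m) u hgt.le hu1)
          have hle : L l ≤ ENNReal.ofReal (x*m) := by
            refine le_trans (measure_mono hsub) ?_
            rw [Real.volume_Ioc, sub_zero]
          rw [hLval] at hle
          have : a ≤ x*m := by
            have h0xm : (0:ℝ) ≤ x*m := le_trans hs hxm1.le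
            exact (ENNReal.ofReal_le_ofReal_iff h0xm).mp hle
          linarith
        -- convert to a real inequality via the core lemma
        have hEfin : PB (E l) ≠ ⊤ := measure_ne_top _ _
        set p : ℝ := (PB (E l)).toReal with hpdef
        have hp0 : 0 ≤ p := ENNReal.toReal_nonneg
        have hpval : PB (E l) = ENNReal.ofReal p := (ENNReal.ofReal_toReal hEfin).symm
        have hpF : Fcdf (a/m) - Fcdf (s/m) ≤ p := by
          rcases le_or_gt (Fcdf (a/m) - Fcdf (s/m)) 0 with hd | hd
          · linarith
          · have h2 := ENNReal.toReal_mono hEfin hq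
            rwa [ENNReal.toReal_ofReal hd.le] at h2
        have hcore := core m s a p hm hs ha0 hp0 (fun _ => hpF)
        rw [max_eq_left (by linarith : (0:ℝ) ≤ a - s)] at hcore
        rw [hTval, hLval, hpval, hcdef]
        have e1 : ENNReal.ofReal (2*m) * ENNReal.ofReal (a-s) = ENNReal.ofReal ((2*m)*(a-s)) :=
          (ENNReal.ofReal_mul (by positivity)).symm
        have e2 : ENNReal.ofReal (3 * betaF (s/m) * m) * ENNReal.ofReal a
            = ENNReal.ofReal ((3 * betaF (s/m) * m) * a) := (ENNReal.ofReal_mul (by positivity)).symm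
        have e3 : ENNReal.ofReal s * ENNReal.ofReal a = ENNReal.ofReal (s*a) :=
          (ENNReal.ofReal_mul hs).symm
        have e4 : ENNReal.ofReal p * ENNReal.ofReal (a-s) = ENNReal.ofReal (p*(a-s)) :=
          (ENNReal.ofReal_mul hp0).symm
        have e5 : ENNReal.ofReal (3*m) * ENNReal.ofReal (p*(a-s)) = ENNReal.ofReal ((3*m)*(p*(a-s))) :=
          (ENNReal.ofReal_mul (by positivity)).symm
        have e6 : ENNReal.ofReal (3 * betaF (s/m) * m) * ENNReal.ofReal m
            = ENNReal.ofReal ((3 * betaF (s/m) * m) * m) := (ENNReal.ofReal_mul (by positivity)).symm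
        have hn1 : 0 ≤ (2*m)*(a-s) := mul_nonneg (by positivity) (by linarith)
        have h3β : 0 ≤ 3 * betaF (s/m) * m := mul_nonneg (mul_nonneg (by norm_num) hβ0) hm.le
        have hn2 : 0 ≤ (3 * betaF (s/m) * m) * a := mul_nonneg h3β ha0
        have hn3 : 0 ≤ s*a := mul_nonneg hs ha0
        have hn4 : 0 ≤ (3*m)*(p*(a-s)) := mul_nonneg (by positivity) (mul_nonneg hp0 (by linarith))
        have hn5 : 0 ≤ (3 * betaF (s/m) * m) * m := mul_nonneg h3β hm.le
        rw [e1, e2, e3, e4, e5, e6, ← ENNReal.ofReal_add hn1 hn2, ← ENNReal.ofReal_add hn3 hn4,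
          ← ENNReal.ofReal_add (add_nonneg hn3 hn4) hn5]
        apply ENNReal.ofReal_le_ofReal
        nlinarith [hcore]
      · -- s at or above the quantile : T l = 0
        have hT0 : T l = 0 := by
          rw [hTdef]
          simp only
          have : S l ∩ Ioi s = ∅ := by
            ext u
            simp only [mem_inter_iff, mem_Ioi, mem_empty_iff_false, iff_false, not_and]
            intro hu1 hu2
            exact hsS (hS_down l s u hu2.le hu1)
          rw [this, measure_empty]
        have hLs : L l ≤ ENNReal.ofReal s := by
          have hsub : S l ∩ Ioi 0 ⊆ Ioc 0 s := by
            rintro u ⟨hu1, hu2⟩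
            refine ⟨hu2, ?_⟩
            by_contra hgt
            push_neg at hgt
            exact hsS (hS_down l s u hgt.le hu1)
          refine le_trans (measure_mono hsub) ?_
          rw [Real.volume_Ioc, sub_zero]
        rw [hT0]
        simp only [mul_zero, zero_add, add_zero]
        rcases le_total (L l) (ENNReal.ofReal m) with hLm | hLm
        · calc c * L l ≤ c * ENNReal.ofReal m := mul_le_mul_right hLm c
            _ ≤ ENNReal.ofReal s * L l + c * ENNReal.ofReal m := le_add_self
        · have hms : m ≤ s := by
            have h2 : ENNReal.ofReal m ≤ ENNReal.ofReal s := le_trans hLm hLs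
            exact (ENNReal.ofReal_le_ofReal_iff hs).mp h2
          have hβz : betaF (s/m) = 0 := by
            apply betaF_eq2
            intro hcon
            have h1m : (1:ℝ) ≤ s/m := (one_le_div hm).mpr hms
            linarith
          rw [hcdef, hβz]
          simp
    -- integrate the per-level inequality
    have hint := lintegral_mono_ae hperl
    have hlhs : ∫⁻ l in Ioo (0:ℝ) 1, (ENNReal.ofReal (2*m) * T l + c * L l) ∂volume
        = ENNReal.ofReal (2*m) * (∫⁻ l in Ioo (0:ℝ) 1, T l ∂volume) + c * ENNReal.ofReal m := by
      rw [lintegral_add_left (hT_meas.const_mul _), lintegral_const_mul _ hT_meas,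
        lintegral_const_mul _ hL_meas, hLint]
    have hrhs : ∫⁻ l in Ioo (0:ℝ) 1,
          (ENNReal.ofReal s * L l + ENNReal.ofReal (3*m) * (PB (E l) * T l) + c * ENNReal.ofReal m) ∂volume
        = ENNReal.ofReal s * ENNReal.ofReal m
          + ENNReal.ofReal (3*m) * (∫⁻ l in Ioo (0:ℝ) 1, PB (E l) * T l ∂volume)
          + c * ENNReal.ofReal m := by
      rw [lintegral_add_left (f := fun l => ENNReal.ofReal s * L l + ENNReal.ofReal (3*m) * (PB (E l) * T l)) ((hL_meas.const_mul _).add ((hPBE_meas.mul hT_meas).const_mul _)),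
        lintegral_add_left (hL_meas.const_mul _), lintegral_const_mul _ hL_meas, hLint,
        lintegral_const_mul (f := fun l => PB (E l) * T l) _ (hPBE_meas.mul hT_meas), lintegral_const]
      congr 1
      rw [Measure.restrict_apply_univ, Real.volume_Ioo, sub_zero, ENNReal.ofReal_one, mul_one]
    rw [hlhs, hrhs] at hint
    have hcfin : c * ENNReal.ofReal m ≠ ⊤ := mul_ne_top ofReal_ne_top ofReal_ne_top
    rw [ENNReal.add_le_add_iff_right hcfin] at hint
    have hint2 : ENNReal.ofReal (2*m) * (∫⁻ b, ENNReal.ofReal (max (b - s) 0) ∂ν)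
        ≤ ENNReal.ofReal s * ENNReal.ofReal m + ENNReal.ofReal (3*m) * W := by
      rw [hJ1]
      exact le_trans hint (add_le_add_right (mul_le_mul_right hJ2 _) _)
    have h2m : ENNReal.ofReal (2*m) = 2 * ENNReal.ofReal m := by
      rw [ENNReal.ofReal_mul (by norm_num : (0:ℝ) ≤ 2), ENNReal.ofReal_ofNat]
    have h3m : ENNReal.ofReal (3*m) = 3 * ENNReal.ofReal m := by
      rw [ENNReal.ofReal_mul (by norm_num : (0:ℝ) ≤ 3), ENNReal.ofReal_ofNat]
    rw [h2m, h3m] at hint2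
    have hfinal : ENNReal.ofReal m * (2 * ∫⁻ b, ENNReal.ofReal (max (b - s) 0) ∂ν)
        ≤ ENNReal.ofReal m * (ENNReal.ofReal s + 3 * W) := by
      calc ENNReal.ofReal m * (2 * ∫⁻ b, ENNReal.ofReal (max (b - s) 0) ∂ν)
          = 2 * ENNReal.ofReal m * (∫⁻ b, ENNReal.ofReal (max (b - s) 0) ∂ν) := by ring
        _ ≤ ENNReal.ofReal s * ENNReal.ofReal m + 3 * ENNReal.ofReal m * W := hint2
        _ = ENNReal.ofReal m * (ENNReal.ofReal s + 3 * W) := by ring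
    exact (ENNReal.mul_le_mul_iff_right (ENNReal.ofReal_pos.mpr hm).ne' ofReal_ne_top).mp hfinal

section PBfacts
variable (PB : Measure ℝ) [IsProbabilityMeasure PB]

lemma PB_Iic (hcdf0 : ∀ x : ℝ, x < 0 → PB (Set.Iic x) = 0)
    (hcdf1 : ∀ x : ℝ, 0 ≤ x → x ≤ 1 / 2 → (PB (Set.Iic x)).toReal = x / (3 - 3 * x))
    (hcdf2 : ∀ x : ℝ, 1 / 2 < x → x ≤ 2 / 3 → (PB (Set.Iic x)).toReal = (4 * x - 1) / 3)
    (hcdf3 : ∀ x : ℝ, 2 / 3 < x → x ≤ 2 → (PB (Set.Iic x)).toReal = (x + 1) / 3)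
    (hcdf4 : ∀ x : ℝ, 2 < x → PB (Set.Iic x) = 1) :
    ∀ x : ℝ, PB (Set.Iic x) = ENNReal.ofReal (Fcdf x) := by
  intro x
  have hfin : PB (Set.Iic x) ≠ ⊤ := measure_ne_top _ _
  rcases lt_or_ge x 0 with h | h
  · rw [hcdf0 x h, Fcdf_eq0 h]; simp
  · rcases le_or_gt x (1/2) with h2 | h2
    · rw [← ENNReal.ofReal_toReal hfin, hcdf1 x h h2, Fcdf_eq1 h h2]
    · rcases le_or_gt x (2/3) with h3 | h3
      · rw [← ENNReal.ofReal_toReal hfin, hcdf2 x h2 h3, Fcdf_eq2 h2 h3]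
      · rcases le_or_gt x 2 with h4 | h4
        · rw [← ENNReal.ofReal_toReal hfin, hcdf3 x h3 h4, Fcdf_eq3 h3 h4]
        · rw [hcdf4 x h4, Fcdf_eq4 h4, ENNReal.ofReal_one]

lemma PB_Iio (hIic : ∀ x : ℝ, PB (Set.Iic x) = ENNReal.ofReal (Fcdf x)) :
    ∀ x : ℝ, PB (Set.Iio x) = ENNReal.ofReal (Fcdf x) := by
  intro x
  have hunion : Set.Iio x = ⋃ n : ℕ, Set.Iic (x - 1/(n+1)) := by
    ext y
    simp only [mem_Iio, mem_iUnion, mem_Iic]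
    constructor
    · intro hy
      obtain ⟨n, hn⟩ := exists_nat_gt (1/(x - y))
      refine ⟨n, ?_⟩
      have hxy : 0 < x - y := by linarith
      have hn0 : 0 < (n:ℝ) + 1 := by positivity
      have h1 : 1/(x-y) < (n:ℝ) + 1 := by linarith [Nat.cast_nonneg (α := ℝ) n]
      have h2 : 1/((n:ℝ)+1) < x - y := by
        have h3 : 1 < ((n:ℝ)+1) * (x - y) := by
          have := (div_lt_iff₀ hxy).mp h1
          nlinarith
        rw [div_lt_iff₀ hn0]
        nlinarith
      linarith
    · rintro ⟨n, hn⟩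
      have : (0:ℝ) < 1/((n:ℝ)+1) := by positivity
      linarith
  have hmono : Monotone (fun n : ℕ => Set.Iic (x - 1/((n:ℝ)+1))) := by
    intro i j hij
    apply Iic_subset_Iic.mpr
    have : (1:ℝ)/((j:ℝ)+1) ≤ 1/((i:ℝ)+1) := by
      apply div_le_div_of_nonneg_left (by norm_num) (by positivity)
      exact_mod_cast by omega
    linarith
  have ht1 : Tendsto (fun n : ℕ => PB (Set.Iic (x - 1/((n:ℝ)+1)))) atTop (𝓝 (PB (Set.Iio x))) := by
    rw [hunion]
    exact tendsto_measure_iUnion_atTop hmono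
  have ht2 : Tendsto (fun n : ℕ => PB (Set.Iic (x - 1/((n:ℝ)+1)))) atTop (𝓝 (ENNReal.ofReal (Fcdf x))) := by
    simp only [hIic]
    apply (ENNReal.continuous_ofReal.tendsto _).comp
    apply (Fcdf_cont.tendsto x).comp
    have : Tendsto (fun n : ℕ => 1/((n:ℝ)+1)) atTop (𝓝 0) := tendsto_one_div_add_atTop_nhds_zero_nat
    have h2 := tendsto_const_nhds (x := x) (f := atTop (α := ℕ)) |>.sub this
    simpa using h2
  exact tendsto_nhds_unique ht1 ht2

lemma PB_Ioo (hIic : ∀ x : ℝ, PB (Set.Iic x) = ENNReal.ofReal (Fcdf x))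
    (hIio : ∀ x : ℝ, PB (Set.Iio x) = ENNReal.ofReal (Fcdf x)) :
    ∀ a b : ℝ, a ≤ b → ENNReal.ofReal (Fcdf b - Fcdf a) ≤ PB (Set.Ioo a b) := by
  intro a b hab
  have hsub : Set.Iio b ⊆ Set.Ioo a b ∪ Set.Iic a := by
    intro y hy
    rcases le_or_gt y a with h | h
    · exact Or.inr h
    · exact Or.inl ⟨h, hy⟩
  have h2 : PB (Set.Iio b) ≤ PB (Set.Ioo a b) + PB (Set.Iic a) :=
    le_trans (measure_mono hsub) (measure_union_le _ _)
  rw [hIio b, hIic a] at h2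
  rw [ENNReal.ofReal_sub _ (Fcdf_nonneg a)]
  exact tsub_le_iff_right.mpr h2

end PBfacts

/-- Expected welfare of the fixed price `p` on the bilateral-trade instance `(μ, ν)`. -/
noncomputable def welfare (μ ν : Measure ℝ) (p : ℝ) : ℝ :=
  ∫ z : ℝ × ℝ, (z.1 + if z.1 ≤ p ∧ p ≤ z.2 then z.2 - z.1 else 0) ∂(μ.prod ν)

/-- Optimal welfare `OPT(I) = E[max(S,B)]`. -/
noncomputable def optWelfare (μ ν : Measure ℝ) : ℝ :=
  ∫ z : ℝ × ℝ, max z.1 z.2 ∂(μ.prod ν)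

theorem mainThm (PB : Measure ℝ) [IsProbabilityMeasure PB]
    (hPBIoo : ∀ a b : ℝ, a ≤ b → ENNReal.ofReal (Fcdf b - Fcdf a) ≤ PB (Ioo a b))
    (μ ν : Measure ℝ) [IsProbabilityMeasure μ] [IsProbabilityMeasure ν]
    (hμ : μ (Set.Iio 0) = 0) (hν : ν (Set.Iio 0) = 0)
    (hμi : Integrable id μ) (hνi : Integrable id ν) :
    (2 / 3) * optWelfare μ ν ≤ ∫ x, welfare μ ν (x * ∫ b, b ∂ν) ∂PB := by
  set m : ℝ := ∫ b, b ∂ν with hmdef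
  have hμae : ∀ᵐ s ∂μ, 0 ≤ s := by
    rw [ae_iff]; convert hμ using 2; ext s; simp [not_le]
  have hνae : ∀ᵐ b ∂ν, 0 ≤ b := by
    rw [ae_iff]; convert hν using 2; ext b; simp [not_le]
  -- integrability on the product
  have hint1 : Integrable (fun z : ℝ × ℝ => z.1) (μ.prod ν) := by
    have h := hμi.mul_prod (integrable_const (1:ℝ) (μ := ν))
    simpa using h
  have hint2 : Integrable (fun z : ℝ × ℝ => z.2) (μ.prod ν) := by
    have h := (integrable_const (1:ℝ) (μ := μ)).mul_prod hνi
    simpa using h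
  have hintabs : Integrable (fun z : ℝ × ℝ => |z.1| + |z.2|) (μ.prod ν) := hint1.abs.add hint2.abs
  have hsetmeas : ∀ p : ℝ, MeasurableSet {z : ℝ × ℝ | z.1 ≤ p ∧ p ≤ z.2} := fun p =>
    (measurableSet_le measurable_fst measurable_const).inter
      (measurableSet_le measurable_const measurable_snd)
  have hifmeas : ∀ p : ℝ, Measurable (fun z : ℝ × ℝ => if z.1 ≤ p ∧ p ≤ z.2 then z.2 - z.1 else 0) :=
    fun p => Measurable.ite (hsetmeas p) (measurable_snd.sub measurable_fst) measurable_const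
  have hintIf : ∀ p : ℝ, Integrable (fun z : ℝ × ℝ => if z.1 ≤ p ∧ p ≤ z.2 then z.2 - z.1 else 0) (μ.prod ν) := by
    intro p
    apply Integrable.mono hintabs (hifmeas p).aestronglyMeasurable
    apply ae_of_all
    intro z
    simp only [Real.norm_eq_abs]
    rw [abs_of_nonneg (by positivity : (0:ℝ) ≤ |z.1| + |z.2|)]
    by_cases hz : z.1 ≤ p ∧ p ≤ z.2
    · rw [if_pos hz, abs_le]
      constructor <;> nlinarith [le_abs_self z.1, le_abs_self z.2, neg_abs_le z.1, neg_abs_le z.2]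
    · rw [if_neg hz]; simp; positivity
  have hintPos : Integrable (fun z : ℝ × ℝ => max (z.2 - z.1) 0) (μ.prod ν) := by
    apply Integrable.mono hintabs ((measurable_snd.sub measurable_fst).max measurable_const).aestronglyMeasurable
    apply ae_of_all
    intro z
    simp only [Real.norm_eq_abs]
    rw [abs_of_nonneg (le_max_right _ _), abs_of_nonneg (by positivity : (0:ℝ) ≤ |z.1| + |z.2|)]
    show max (z.2 - z.1) 0 ≤ |z.1| + |z.2|
    rcases le_total (z.2 - z.1) 0 with h | h
    · rw [max_eq_right h]; positivity
    · rw [max_eq_left h]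
      nlinarith [le_abs_self z.1, le_abs_self z.2, neg_abs_le z.1, neg_abs_le z.2]
  have hintMax : Integrable (fun z : ℝ × ℝ => max z.1 z.2) (μ.prod ν) := by
    have heq : (fun z : ℝ × ℝ => max z.1 z.2) = fun z : ℝ × ℝ => z.1 + max (z.2 - z.1) 0 := by
      funext z
      rcases le_total z.1 z.2 with h | h
      · rw [max_eq_right h, max_eq_left (by linarith)]; ring
      · rw [max_eq_left h, max_eq_right (by linarith)]; ring
    rw [heq]
    exact hint1.add hintPos
  -- decomposition of welfare and optWelfare
  set Es : ℝ := ∫ z : ℝ × ℝ, z.1 ∂(μ.prod ν) with hEsdef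
  set Dr : ℝ := ∫ z : ℝ × ℝ, max (z.2 - z.1) 0 ∂(μ.prod ν) with hDrdef
  set Wr : ℝ → ℝ := fun p => ∫ z : ℝ × ℝ, (if z.1 ≤ p ∧ p ≤ z.2 then z.2 - z.1 else 0) ∂(μ.prod ν) with hWrdef
  have hopt : optWelfare μ ν = Es + Dr := by
    rw [optWelfare, hEsdef, hDrdef, ← integral_add hint1 hintPos]
    apply integral_congr_ae
    apply ae_of_all
    intro z
    show max z.1 z.2 = z.1 + max (z.2 - z.1) 0
    rcases le_total z.1 z.2 with h | h
    · rw [max_eq_right h, max_eq_left (by linarith)]; ring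
    · rw [max_eq_left h, max_eq_right (by linarith)]; ring
  have hwel : ∀ p : ℝ, welfare μ ν p = Es + Wr p := fun p => integral_add hint1 (hintIf p)
  -- measurability of p ↦ Wr (x * m)
  have hWmeas : StronglyMeasurable (fun x : ℝ => Wr (x * m)) := by
    have hm2 : StronglyMeasurable (Function.uncurry (fun (x : ℝ) (z : ℝ × ℝ) =>
        if z.1 ≤ x * m ∧ x * m ≤ z.2 then z.2 - z.1 else 0)) := by
      apply Measurable.stronglyMeasurable
      apply Measurable.ite _ (measurable_snd.comp measurable_snd |>.sub (measurable_fst.comp measurable_snd)) measurable_const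
      exact (measurableSet_le (measurable_fst.comp measurable_snd) (measurable_fst.mul_const m)).inter
        (measurableSet_le (measurable_fst.mul_const m) (measurable_snd.comp measurable_snd))
    exact hm2.integral_prod_right'
  have hWnn : ∀ p : ℝ, 0 ≤ Wr p := by
    intro p
    apply integral_nonneg
    intro z
    show (0:ℝ) ≤ if z.1 ≤ p ∧ p ≤ z.2 then z.2 - z.1 else 0
    by_cases hz : z.1 ≤ p ∧ p ≤ z.2
    · rw [if_pos hz]; linarith [hz.1, hz.2]
    · rw [if_neg hz]
  have hWle : ∀ p : ℝ, Wr p ≤ Dr := by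
    intro p
    apply integral_mono (hintIf p) hintPos
    intro z
    show (if z.1 ≤ p ∧ p ≤ z.2 then z.2 - z.1 else 0) ≤ max (z.2 - z.1) 0
    by_cases hz : z.1 ≤ p ∧ p ≤ z.2
    · rw [if_pos hz]; exact le_max_left _ _
    · rw [if_neg hz]; exact le_max_right _ _
  have hWint : Integrable (fun x : ℝ => Wr (x * m)) PB := by
    apply Integrable.mono (integrable_const Dr) hWmeas.aestronglyMeasurable
    apply ae_of_all
    intro x
    rw [Real.norm_eq_abs, Real.norm_eq_abs, abs_of_nonneg (hWnn _)]
    exact le_trans (hWle _) (le_abs_self _)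
  have hrhs : ∫ x, welfare μ ν (x * m) ∂PB = Es + ∫ x, Wr (x * m) ∂PB := by
    calc ∫ x, welfare μ ν (x * m) ∂PB = ∫ x, (Es + Wr (x * m)) ∂PB :=
          integral_congr_ae (ae_of_all _ fun x => hwel (x * m))
      _ = Es + ∫ x, Wr (x * m) ∂PB := by
          rw [integral_add (integrable_const Es) hWint, integral_const]
          simp
  have hprodae : ∀ᵐ z ∂(μ.prod ν), 0 ≤ (z : ℝ × ℝ).1 := by
    rw [ae_iff]
    have hset : {z : ℝ × ℝ | ¬ 0 ≤ z.1} = Iio 0 ×ˢ (univ : Set ℝ) := by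
      ext z; simp [not_le]
    rw [hset, Measure.prod_prod, hμ, zero_mul]
  have hEs0 : 0 ≤ Es := by
    rw [hEsdef]
    exact integral_nonneg_of_ae hprodae
  have hWint0 : 0 ≤ ∫ x, Wr (x * m) ∂PB := integral_nonneg fun x => hWnn _
  rw [hopt, hrhs]
  -- main estimate
  have hkey : 2 * Dr ≤ Es + 3 * ∫ x, Wr (x * m) ∂PB := by
    have hf1meas : Measurable (fun z : ℝ × ℝ => max (z.2 - z.1) 0) :=
      (measurable_snd.sub measurable_fst).max measurable_const
    set Dl : ℝ≥0∞ := ∫⁻ z : ℝ × ℝ, ENNReal.ofReal (max (z.2 - z.1) 0) ∂(μ.prod ν) with hDldef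
    set Esl : ℝ≥0∞ := ∫⁻ s, ENNReal.ofReal s ∂μ with hEsldef
    set Ix : ℝ → ℝ≥0∞ := fun x =>
      ∫⁻ z : ℝ × ℝ, ENNReal.ofReal (if z.1 ≤ x * m ∧ x * m ≤ z.2 then z.2 - z.1 else 0) ∂(μ.prod ν) with hIxdef
    set Wl : ℝ≥0∞ := ∫⁻ x, Ix x ∂PB with hWldef
    have hDr2 : Dr = Dl.toReal := by
      have h0 : 0 ≤ᵐ[μ.prod ν] fun z : ℝ × ℝ => max (z.2 - z.1) 0 :=
        ae_of_all _ fun z => le_max_right _ _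
      rw [hDrdef, integral_eq_lintegral_of_nonneg_ae h0 hf1meas.aestronglyMeasurable]
    have hEsμ : Es = ∫ s, s ∂μ := by
      rw [hEsdef, integral_prod _ hint1]
      simp
    have hEs2 : Es = Esl.toReal := by
      rw [hEsμ, integral_eq_lintegral_of_nonneg_ae hμae measurable_id.aestronglyMeasurable]
    have hWx : ∀ x : ℝ, ENNReal.ofReal (Wr (x * m)) = Ix x := fun x => by
      rw [hWrdef, hIxdef]
      exact ofReal_integral_eq_lintegral_ofReal (hintIf _) (ae_of_all _ fun z => by
        show (0:ℝ) ≤ if z.1 ≤ x*m ∧ x*m ≤ z.2 then z.2 - z.1 else 0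
        by_cases hz : z.1 ≤ x*m ∧ x*m ≤ z.2
        · rw [if_pos hz]; linarith [hz.1, hz.2]
        · rw [if_neg hz])
    have hW2 : ∫ x, Wr (x * m) ∂PB = Wl.toReal := by
      rw [integral_eq_lintegral_of_nonneg_ae (ae_of_all _ fun x => hWnn _) hWmeas.aestronglyMeasurable]
      congr 1
      exact lintegral_congr fun x => hWx x
    -- finiteness
    have hDfin : Dl ≠ ⊤ := by
      apply ne_of_lt
      calc Dl ≤ ∫⁻ z : ℝ × ℝ, ‖max (z.2 - z.1) 0‖ₑ ∂(μ.prod ν) :=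
            lintegral_mono fun z => Real.ofReal_le_enorm _
        _ < ⊤ := hintPos.2
    have hEsfin : Esl ≠ ⊤ := by
      apply ne_of_lt
      calc Esl ≤ ∫⁻ s, ‖s‖ₑ ∂μ := lintegral_mono fun s => Real.ofReal_le_enorm _
        _ < ⊤ := hμi.2
    have hIxle : ∀ x, Ix x ≤ Dl := by
      intro x
      apply lintegral_mono
      intro z
      apply ENNReal.ofReal_le_ofReal
      by_cases hz : z.1 ≤ x*m ∧ x*m ≤ z.2
      · rw [if_pos hz]; exact le_max_left _ _
      · rw [if_neg hz]; exact le_max_right _ _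
    have hWfin : Wl ≠ ⊤ := by
      apply ne_of_lt
      calc Wl ≤ ∫⁻ _x, Dl ∂PB := lintegral_mono hIxle
        _ = Dl := by rw [lintegral_const, measure_univ, mul_one]
        _ < ⊤ := lt_top_iff_ne_top.mpr hDfin
    -- measurability of inner integrals
    have hinner1unc : Measurable (Function.uncurry fun (s : ℝ) (b : ℝ) => ENNReal.ofReal (max (b - s) 0)) := by
      apply ENNReal.measurable_ofReal.comp
      exact ((measurable_snd.sub measurable_fst).max measurable_const)
    have hinner1meas : Measurable (fun s : ℝ => ∫⁻ b, ENNReal.ofReal (max (b - s) 0) ∂ν) :=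
      Measurable.lintegral_prod_right' hinner1unc
    have hinner2unc : Measurable (Function.uncurry fun (p : ℝ × ℝ) (b : ℝ) =>
        ENNReal.ofReal (if p.2 ≤ p.1 * m ∧ p.1 * m ≤ b then b - p.2 else 0)) := by
      apply ENNReal.measurable_ofReal.comp
      apply Measurable.ite _ (measurable_snd.sub measurable_fst.snd) measurable_const
      exact (measurableSet_le measurable_fst.snd (measurable_fst.fst.mul_const m)).inter
        (measurableSet_le (measurable_fst.fst.mul_const m) measurable_snd)
    have hinner2meas : Measurable (fun p : ℝ × ℝ =>
        ∫⁻ b, ENNReal.ofReal (if p.2 ≤ p.1 * m ∧ p.1 * m ≤ b then b - p.2 else 0) ∂ν) :=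
      Measurable.lintegral_prod_right' hinner2unc
    have hinner3meas : Measurable (fun s : ℝ => ∫⁻ x,
        (∫⁻ b, ENNReal.ofReal (if s ≤ x * m ∧ x * m ≤ b then b - s else 0) ∂ν) ∂PB) := by
      exact Measurable.lintegral_prod_right' (hinner2meas.comp measurable_swap)
    -- Tonelli
    have hprodmeas : Measurable (fun z : ℝ × ℝ => ENNReal.ofReal (max (z.2 - z.1) 0)) :=
      ENNReal.measurable_ofReal.comp hf1meas
    have hD3 : Dl = ∫⁻ s, (∫⁻ b, ENNReal.ofReal (max (b - s) 0) ∂ν) ∂μ := by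
      rw [hDldef, lintegral_prod _ hprodmeas.aemeasurable]
    have hIx2 : ∀ x : ℝ, Ix x = ∫⁻ s, (∫⁻ b, ENNReal.ofReal (if s ≤ x * m ∧ x * m ≤ b then b - s else 0) ∂ν) ∂μ := by
      intro x
      simp only [hIxdef]
      have hmeas4 : Measurable (fun z : ℝ × ℝ =>
          ENNReal.ofReal (if z.1 ≤ x * m ∧ x * m ≤ z.2 then z.2 - z.1 else 0)) := by
        apply ENNReal.measurable_ofReal.comp
        exact Measurable.ite ((measurableSet_le measurable_fst measurable_const).inter
          (measurableSet_le measurable_const measurable_snd))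
          (measurable_snd.sub measurable_fst) measurable_const
      rw [lintegral_prod _ hmeas4.aemeasurable]
    have hW3 : Wl = ∫⁻ s, ∫⁻ x,
        (∫⁻ b, ENNReal.ofReal (if s ≤ x * m ∧ x * m ≤ b then b - s else 0) ∂ν) ∂PB ∂μ := by
      rw [hWldef]
      rw [lintegral_congr hIx2]
      exact lintegral_lintegral_swap hinner2meas.aemeasurable
    -- reduce to the per-s inequality
    have hEkey : 2 * Dl ≤ Esl + 3 * Wl := by
      rw [hD3, hW3, hEsldef, ← lintegral_const_mul 2 hinner1meas,
        ← lintegral_const_mul 3 hinner3meas, ← lintegral_add_left ENNReal.measurable_ofReal]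
      apply lintegral_mono_ae
      filter_upwards [hμae] with s hs
      exact perS PB ν hPBIoo hν hνi hmdef s hs
    -- back to reals
    have hRfin : Esl + 3 * Wl ≠ ⊤ := by
      apply ENNReal.add_ne_top.mpr
      exact ⟨hEsfin, ENNReal.mul_ne_top (by norm_num) hWfin⟩
    have htr := ENNReal.toReal_mono hRfin hEkey
    rw [ENNReal.toReal_mul, ENNReal.toReal_add hEsfin (ENNReal.mul_ne_top (by norm_num) hWfin),
      ENNReal.toReal_mul] at htr
    simp only [ENNReal.toReal_ofNat] at htr
    rw [hDr2, hEs2, hW2]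
    linarith
  linarith

/-- Let `P_B` be the probability measure on `ℝ` with the cdf `G` given by
`G(x) = 0` for `x < 0`, `G(x) = x/(3−3x)` on `[0,1/2]`, `G(x) = (4x−1)/3` on `(1/2,2/3]`,
`G(x) = (x+1)/3` on `(2/3,2]`, and `G(x) = 1` for `x > 2`. Then the mechanism `M_B`
that draws `x ~ P_B` and posts the price `x · E[B]` obtains at least `2/3` of the
optimal welfare on every instance with finite first moments. -/
theorem stmt_8 (PB : Measure ℝ) [IsProbabilityMeasure PB]
    (hcdf0 : ∀ x : ℝ, x < 0 → PB (Set.Iic x) = 0)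
    (hcdf1 : ∀ x : ℝ, 0 ≤ x → x ≤ 1 / 2 → (PB (Set.Iic x)).toReal = x / (3 - 3 * x))
    (hcdf2 : ∀ x : ℝ, 1 / 2 < x → x ≤ 2 / 3 → (PB (Set.Iic x)).toReal = (4 * x - 1) / 3)
    (hcdf3 : ∀ x : ℝ, 2 / 3 < x → x ≤ 2 → (PB (Set.Iic x)).toReal = (x + 1) / 3)
    (hcdf4 : ∀ x : ℝ, 2 < x → PB (Set.Iic x) = 1)
    (μ ν : Measure ℝ) [IsProbabilityMeasure μ] [IsProbabilityMeasure ν]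
    (hμ : μ (Set.Iio 0) = 0) (hν : ν (Set.Iio 0) = 0)
    (hμi : Integrable id μ) (hνi : Integrable id ν) :
    (2 / 3) * optWelfare μ ν ≤ ∫ x, welfare μ ν (x * ∫ b, b ∂ν) ∂PB := by
  have hIic := PB_Iic PB hcdf0 hcdf1 hcdf2 hcdf3 hcdf4
  have hIio := PB_Iio PB hIic
  have hIoo := PB_Ioo PB hIic hIio
  exact mainThm PB hIoo μ ν hμ hν hμi hνi
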